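/- For every real a > 0 there exists a constant C > 0 such that |s_n^{(r)} − n(n + 2k + 1)·t_∞^{(r)}| ≤ C·a^n for all n ≥ 1. -/

import Mathlib

open Finset Filter Topology

private lemma convex_exact {lam mu x y z e : ℝ} (hl0 : 0 ≤ lam) (hm0 : 0 ≤ mu)
    (hsum : lam + mu = 1) (hx : |x - z| ≤ e) (hy : |y - z| ≤ e) :
    |lam * x + mu * y - z| ≤ e := by
  have h1 : lam * x + mu * y - z = lam * (x - z) + mu * (y - z) := by
    linear_combination z * hsum
  rw [h1]
  calc |lam * (x - z) + mu * (y - z)| ≤ |lam * (x - z)| + |mu * (y - z)| := abs_add_le _ _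
    _ = lam * |x - z| + mu * |y - z| := by
        rw [abs_mul, abs_mul, abs_of_nonneg hl0, abs_of_nonneg hm0]
    _ ≤ lam * e + mu * e := by
        have h2 := abs_nonneg (x - z)
        have h3 := abs_nonneg (y - z)
        have := mul_le_mul_of_nonneg_left hx hl0
        have := mul_le_mul_of_nonneg_left hy hm0
        linarith
    _ = e := by linear_combination e * hsum

private lemma convex_est {lam mu x y z e f g : ℝ} (hl0 : 0 ≤ lam) (hm0 : 0 ≤ mu)
    (hsum : lam + mu = 1) (hg : mu ≤ g) (hx : |x - z| ≤ e) (hy : |y - z| ≤ f)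
    (he : 0 ≤ e) (hf : 0 ≤ f) :
    |lam * x + mu * y - z| ≤ e + g * f := by
  have h1 : lam * x + mu * y - z = lam * (x - z) + mu * (y - z) := by
    linear_combination z * hsum
  rw [h1]
  have hlam1 : lam ≤ 1 := by linarith
  calc |lam * (x - z) + mu * (y - z)| ≤ |lam * (x - z)| + |mu * (y - z)| := abs_add_le _ _
    _ = lam * |x - z| + mu * |y - z| := by
        rw [abs_mul, abs_mul, abs_of_nonneg hl0, abs_of_nonneg hm0]
    _ ≤ 1 * e + g * f := by
        have h2 := abs_nonneg (x - z)
        have h3 := abs_nonneg (y - z)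
        have h4 : lam * |x - z| ≤ 1 * e := by nlinarith
        have h5 : mu * |y - z| ≤ g * f := by nlinarith
        linarith
    _ = e + g * f := by ring

private lemma two_div_mul {x W : ℝ} (hx : x ≠ 0) : 2 / x * (x * W) = 2 * W := by
  field_simp

private lemma parking_core (k : ℕ) (t : ℕ → ℝ) (lam mu : ℕ → ℝ)
    (hl0 : ∀ m, k + 2 ≤ m → 0 ≤ lam m)
    (hm0 : ∀ m, k + 2 ≤ m → 0 ≤ mu m)
    (hsum : ∀ m, k + 2 ≤ m → lam m + mu m = 1)
    (hmu : ∀ m, k + 2 ≤ m → mu m ≤ 2 / m)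
    (hrec : ∀ m, k + 2 ≤ m → t m = lam m * t (m - 1) + mu m * t (m - k - 1))
    (tinf : ℝ) (htinf : Tendsto t atTop (𝓝 tinf)) :
    ∀ c : ℝ, 0 < c → c < 1 → ∃ C : ℝ, 0 < C ∧
      ∀ n : ℕ, 1 ≤ n → |t n - tinf| ≤ C * c ^ n := by
  intro c hc hc1
  set q : ℝ := c ^ (k + 1) with hqdef
  have hq0 : 0 < q := pow_pos hc _
  have hq1 : q < 1 := pow_lt_one₀ (le_of_lt hc) hc1 (by omega)
  set N : ℕ := max (k + 2) ⌈(4 * ((k : ℝ) + 1) + 1) / q⌉₊ with hNdef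
  have hN1 : k + 2 ≤ N := le_max_left _ _
  have hN0 : 0 < N := by omega
  have hNq : 4 * ((k : ℝ) + 1) ≤ q * N := by
    have h1 : ((⌈(4 * ((k : ℝ) + 1) + 1) / q⌉₊ : ℝ)) ≤ (N : ℝ) :=
      Nat.cast_le.mpr (le_max_right _ _)
    have h2 : (4 * ((k : ℝ) + 1) + 1) / q ≤ (N : ℝ) :=
      le_trans (Nat.le_ceil _) h1
    have h3 : 4 * ((k : ℝ) + 1) + 1 ≤ q * N := by
      rw [div_le_iff₀ hq0] at h2; linarith [mul_comm q (N : ℝ)]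
    linarith
  have hcontr : ∀ b : ℕ, N ≤ b → 4 * ((k : ℝ) + 1) / b ≤ q := by
    intro b hb
    have hb0 : (0 : ℝ) < b := by
      exact_mod_cast Nat.cast_pos.mpr (by omega : 0 < b)
    have hNb : (N : ℝ) ≤ b := by exact_mod_cast hb
    rw [div_le_iff₀ hb0]
    calc 4 * ((k : ℝ) + 1) ≤ q * N := hNq
      _ ≤ q * b := by nlinarith
  -- window contraction step
  have step : ∀ b : ℕ, N ≤ b → ∀ e : ℝ,
      (∀ i1 ∈ Finset.Icc (b - k) b, ∀ i2 ∈ Finset.Icc (b - k) b, |t i1 - t i2| ≤ e) →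
      ∀ i1 ∈ Finset.Icc (b + 1) (b + k + 1), ∀ i2 ∈ Finset.Icc (b + 1) (b + k + 1),
        |t i1 - t i2| ≤ q * e := by
    intro b hb e hwin
    have hbmem : b ∈ Finset.Icc (b - k) b := by simp [Finset.mem_Icc]
    have he : 0 ≤ e := le_trans (abs_nonneg _) (hwin b hbmem b hbmem)
    have hb0 : (0 : ℝ) < b := by exact_mod_cast Nat.cast_pos.mpr (by omega : 0 < b)
    have main : ∀ j : ℕ, j ≤ k + 1 → |t (b + j) - t b| ≤ 2 * (j : ℝ) / b * e := by
      intro j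
      induction j with
      | zero => intro _; simp
      | succ j ih =>
        intro hj
        have hm : k + 2 ≤ b + (j + 1) := by omega
        have hx := ih (by omega)
        have hy := hwin (b + j - k) (by simp [Finset.mem_Icc]; omega) b hbmem
        have e1 : b + (j + 1) - 1 = b + j := by omega
        have e2 : b + (j + 1) - k - 1 = b + j - k := by omega
        have hrw := hrec _ hm
        rw [e1, e2] at hrw
        rw [hrw]
        have hxe : 0 ≤ 2 * (j : ℝ) / b * e := by positivity
        have hmub : mu (b + (j + 1)) ≤ 2 / b := by
          refine le_trans (hmu _ hm) ?_
          have : (b : ℝ) ≤ ((b + (j + 1) : ℕ) : ℝ) := by exact_mod_cast by omega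
          exact div_le_div_of_nonneg_left (by norm_num) hb0 this
        have hest := convex_est (hl0 _ hm) (hm0 _ hm) (hsum _ hm) hmub hx hy hxe he
        refine le_trans hest ?_
        have : 2 * (j : ℝ) / b * e + 2 / b * e = 2 * ((j : ℝ) + 1) / b * e := by
          field_simp
        rw [this]
        push_cast
        exact le_refl _
    intro i1 hi1 i2 hi2
    rw [Finset.mem_Icc] at hi1 hi2
    have h1 := main (i1 - b) (by omega)
    have h2 := main (i2 - b) (by omega)
    rw [show b + (i1 - b) = i1 from by omega] at h1
    rw [show b + (i2 - b) = i2 from by omega] at h2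
    have hcast : ∀ i : ℕ, i ≤ k + 1 → ((i : ℝ)) ≤ (k : ℝ) + 1 := by
      intro i hi
      calc (i : ℝ) ≤ ((k + 1 : ℕ) : ℝ) := Nat.cast_le.mpr hi
        _ = (k : ℝ) + 1 := by push_cast; ring
    have hc1' : 2 * ((i1 - b : ℕ) : ℝ) / b * e ≤ 2 * ((k : ℝ) + 1) / b * e := by
      have := hcast (i1 - b) (by omega); gcongr
    have hc2' : 2 * ((i2 - b : ℕ) : ℝ) / b * e ≤ 2 * ((k : ℝ) + 1) / b * e := by
      have := hcast (i2 - b) (by omega); gcongr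
    calc |t i1 - t i2| ≤ |t i1 - t b| + |t b - t i2| := abs_sub_le _ _ _
      _ = |t i1 - t b| + |t i2 - t b| := by rw [abs_sub_comm (t b)]
      _ ≤ 2 * ((k : ℝ) + 1) / b * e + 2 * ((k : ℝ) + 1) / b * e :=
          add_le_add (le_trans h1 hc1') (le_trans h2 hc2')
      _ = (4 * ((k : ℝ) + 1) / b) * e := by ring
      _ ≤ q * e := mul_le_mul_of_nonneg_right (hcontr b hb) he
  -- tail invariance
  have tail : ∀ b : ℕ, N ≤ b → ∀ e : ℝ,
      (∀ i ∈ Finset.Icc (b - k) b, |t i - t b| ≤ e) →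
      ∀ m : ℕ, b - k ≤ m → |t m - t b| ≤ e := by
    intro b hb e hwin m
    induction m using Nat.strong_induction_on with
    | _ m ih =>
      intro hm
      by_cases hmb : m ≤ b
      · exact hwin m (by simp [Finset.mem_Icc]; omega)
      · have hm2 : k + 2 ≤ m := by omega
        have hx := ih (m - 1) (by omega) (by omega)
        have hy := ih (m - k - 1) (by omega) (by omega)
        rw [hrec m hm2]
        exact convex_exact (hl0 m hm2) (hm0 m hm2) (hsum m hm2) hx hy
  -- initial window bound
  set e0 : ℝ := 1 + ∑ i ∈ Finset.Icc (N - k) N, ∑ j ∈ Finset.Icc (N - k) N, |t i - t j|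
    with he0def
  have hsum0 : (0 : ℝ) ≤ ∑ i ∈ Finset.Icc (N - k) N, ∑ j ∈ Finset.Icc (N - k) N, |t i - t j| :=
    Finset.sum_nonneg fun _ _ => Finset.sum_nonneg fun _ _ => abs_nonneg _
  have he0pos : 0 < e0 := by rw [he0def]; linarith
  have hwin0 : ∀ i1 ∈ Finset.Icc (N - k) N, ∀ i2 ∈ Finset.Icc (N - k) N,
      |t i1 - t i2| ≤ e0 := by
    intro i1 hi1 i2 hi2
    have h1 : |t i1 - t i2| ≤ ∑ j ∈ Finset.Icc (N - k) N, |t i1 - t j| :=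
      Finset.single_le_sum (f := fun j => |t i1 - t j|) (fun _ _ => abs_nonneg _) hi2
    have h2 : ∑ j ∈ Finset.Icc (N - k) N, |t i1 - t j| ≤
        ∑ i ∈ Finset.Icc (N - k) N, ∑ j ∈ Finset.Icc (N - k) N, |t i - t j| :=
      Finset.single_le_sum
        (f := fun i => ∑ j ∈ Finset.Icc (N - k) N, |t i - t j|)
        (fun i _ => Finset.sum_nonneg fun _ _ => abs_nonneg _) hi1
    rw [he0def]; linarith
  -- block induction
  have hblock : ∀ j : ℕ, ∀ i1 ∈ Finset.Icc (N + j * (k + 1) - k) (N + j * (k + 1)),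
      ∀ i2 ∈ Finset.Icc (N + j * (k + 1) - k) (N + j * (k + 1)),
      |t i1 - t i2| ≤ e0 * q ^ j := by
    intro j
    induction j with
    | zero =>
      simp only [Nat.zero_mul, Nat.add_zero, pow_zero, mul_one]
      exact hwin0
    | succ j ih =>
      have hmul : N + (j + 1) * (k + 1) = (N + j * (k + 1)) + (k + 1) := by ring
      rw [hmul]
      have hstep := step (N + j * (k + 1)) (Nat.le_add_right _ _) (e0 * q ^ j) ih
      intro i1 hi1 i2 hi2
      have hIcc : Finset.Icc (N + j * (k + 1) + (k + 1) - k) (N + j * (k + 1) + (k + 1)) =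
          Finset.Icc (N + j * (k + 1) + 1) (N + j * (k + 1) + k + 1) := by
        congr 1 <;> omega
      rw [hIcc] at hi1 hi2
      have := hstep i1 hi1 i2 hi2
      calc |t i1 - t i2| ≤ q * (e0 * q ^ j) := this
        _ = e0 * q ^ (j + 1) := by ring
  -- per-block distance to the limit
  have hblockinf : ∀ j : ℕ, ∀ i ∈ Finset.Icc (N + j * (k + 1) - k) (N + j * (k + 1)),
      |t i - tinf| ≤ 2 * (e0 * q ^ j) := by
    intro j i hi
    set b := N + j * (k + 1) with hbdef
    have hbmem : b ∈ Finset.Icc (b - k) b := by simp [Finset.mem_Icc]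
    have hwb : ∀ i' ∈ Finset.Icc (b - k) b, |t i' - t b| ≤ e0 * q ^ j :=
      fun i' hi' => hblock j i' hi' b hbmem
    have htail := tail b (Nat.le_add_right _ _) _ hwb
    have hlim : |tinf - t b| ≤ e0 * q ^ j := by
      have hev : ∀ᶠ m in atTop, |t m - t b| ≤ e0 * q ^ j :=
        eventually_atTop.mpr ⟨b, fun m hm => htail m (by omega)⟩
      have h2 : Tendsto (fun m => |t m - t b|) atTop (𝓝 |tinf - t b|) :=
        ((htinf.sub_const (t b)).abs)
      exact le_of_tendsto h2 hev
    calc |t i - tinf| ≤ |t i - t b| + |t b - tinf| := abs_sub_le _ _ _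
      _ ≤ e0 * q ^ j + e0 * q ^ j :=
          add_le_add (hblock j i hi b hbmem) (by rwa [abs_sub_comm])
      _ = 2 * (e0 * q ^ j) := by ring
  -- the main tail estimate
  have hcN : (0 : ℝ) < c ^ N := pow_pos hc _
  have hmain : ∀ n : ℕ, N ≤ n → |t n - tinf| ≤ (2 * e0 / c ^ N) * c ^ n := by
    intro n hn
    set j := (n - N + k) / (k + 1) with hjdef
    have hdm : (k + 1) * j + (n - N + k) % (k + 1) = n - N + k := Nat.div_add_mod _ _
    have hmod : (n - N + k) % (k + 1) < k + 1 := Nat.mod_lt _ (Nat.succ_pos k)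
    obtain ⟨J, hJ⟩ : ∃ J, J = (k + 1) * j := ⟨_, rfl⟩
    rw [← hJ] at hdm
    have hj1 : n - N ≤ J := by omega
    have hj2 : N + J ≤ n + k := by omega
    have hmem : n ∈ Finset.Icc (N + j * (k + 1) - k) (N + j * (k + 1)) := by
      rw [Finset.mem_Icc, mul_comm j (k + 1), ← hJ]
      omega
    have h1 := hblockinf j n hmem
    have hqle : q ^ j ≤ c ^ (n - N) := by
      have hq : q ^ j = c ^ ((k + 1) * j) := by rw [hqdef, ← pow_mul]
      rw [hq, ← hJ]
      exact pow_le_pow_of_le_one (le_of_lt hc) (le_of_lt hc1) hj1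
    have h2 : c ^ (n - N) * c ^ N = c ^ n := by
      rw [← pow_add]; congr 1; omega
    calc |t n - tinf| ≤ 2 * (e0 * q ^ j) := h1
      _ ≤ 2 * (e0 * c ^ (n - N)) := by
          have := mul_le_mul_of_nonneg_left hqle (le_of_lt he0pos)
          linarith
      _ = (2 * e0 / c ^ N) * (c ^ (n - N) * c ^ N) := by field_simp
      _ = (2 * e0 / c ^ N) * c ^ n := by rw [h2]
  -- assemble the constant
  set S : ℝ := ∑ m ∈ Finset.Icc 1 N, |t m - tinf| / c ^ m with hSdef
  have hS0 : 0 ≤ S := Finset.sum_nonneg fun m _ => by positivity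
  refine ⟨2 * e0 / c ^ N + S + 1, by positivity, ?_⟩
  intro n hn
  have hcn : (0 : ℝ) < c ^ n := pow_pos hc _
  by_cases hnN : N ≤ n
  · have h1 := hmain n hnN
    have h2 : (2 * e0 / c ^ N) * c ^ n ≤ (2 * e0 / c ^ N + S + 1) * c ^ n := by nlinarith
    linarith
  · have hmem : n ∈ Finset.Icc 1 N := Finset.mem_Icc.mpr ⟨hn, by omega⟩
    have h1 : |t n - tinf| / c ^ n ≤ S :=
      Finset.single_le_sum (f := fun m => |t m - tinf| / c ^ m)
        (fun m _ => by positivity) hmem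
    have h2 : |t n - tinf| ≤ S * c ^ n := by
      rw [div_le_iff₀ hcn] at h1; exact h1
    have h3 : 0 < 2 * e0 / c ^ N := by positivity
    nlinarith


/-- Rényi parking, discrete model: for every `a > 0` there is `C > 0` with
`|s n - n(n+2k+1)·t_∞| ≤ C·aⁿ` for all `n ≥ 1`. -/
theorem parking_s_asymptotics
    (k r : ℕ) (hk : 1 ≤ k) (hkr : k ≤ r) (hrk : r ≤ 2 * k)
    (a s t u : ℕ → ℝ)
    (ha_init : ∀ n : ℕ, 1 ≤ n → n ≤ k + 1 →
      a n = if n = r - k + 1 then 1 else 0)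
    (ha_rec : ∀ n : ℕ, k + 2 ≤ n →
      a n = 2 / ((n : ℝ) - k - 1) * ∑ i ∈ Finset.Icc 1 (n - k - 1), a i)
    (hs : ∀ n : ℕ, s n = ∑ i ∈ Finset.Icc 1 n, a i)
    (ht : ∀ n : ℕ, t n = s n / ((n : ℝ) * ((n : ℝ) + 2 * k + 1)))
    (hu : ∀ n : ℕ, 2 ≤ n → u n = t n - t (n - 1))
    (tinf : ℝ) (htinf : Filter.Tendsto t Filter.atTop (𝓝 tinf)) :
    ∀ c : ℝ, 0 < c → ∃ C : ℝ, 0 < C ∧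
      ∀ n : ℕ, 1 ≤ n →
        |s n - (n : ℝ) * ((n : ℝ) + 2 * k + 1) * tinf| ≤ C * c ^ n := by
  -- the positive denominator
  have hP : ∀ n : ℕ, 1 ≤ n → (0 : ℝ) < (n : ℝ) * ((n : ℝ) + 2 * k + 1) := by
    intro n hn
    have h1 : (1 : ℝ) ≤ (n : ℝ) := by exact_mod_cast hn
    have h2 : (0 : ℝ) ≤ (k : ℝ) := Nat.cast_nonneg _
    nlinarith
  have hst : ∀ n : ℕ, 1 ≤ n → s n = (n : ℝ) * ((n : ℝ) + 2 * k + 1) * t n := by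
    intro n hn
    rw [ht n]
    field_simp
  -- the key recurrence for t
  have key : ∀ m : ℕ, k + 2 ≤ m →
      (m : ℝ) * ((m : ℝ) + 2 * k + 1) * t m =
        ((m : ℝ) - 1) * ((m : ℝ) + 2 * k) * t (m - 1) +
          2 * ((m : ℝ) + k) * t (m - k - 1) := by
    intro m hm
    obtain ⟨m', rfl⟩ : ∃ m', m = m' + 1 := ⟨m - 1, by omega⟩
    have hsm : s (m' + 1) = s m' + a (m' + 1) := by
      rw [hs (m' + 1), hs m', Finset.sum_Icc_succ_top (by omega : 1 ≤ m' + 1)]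
    have ham : a (m' + 1) = 2 / (((m' + 1 : ℕ) : ℝ) - k - 1) * s (m' + 1 - k - 1) := by
      rw [ha_rec (m' + 1) hm, ← hs (m' + 1 - k - 1)]
    have hcast1 : ((m' + 1 - k - 1 : ℕ) : ℝ) = ((m' + 1 : ℕ) : ℝ) - k - 1 := by
      have : m' + 1 - k - 1 = m' - k := by omega
      rw [this]
      have hkm : k ≤ m' := by omega
      push_cast [Nat.cast_sub hkm]
      ring
    have hx : (0 : ℝ) < ((m' + 1 : ℕ) : ℝ) - k - 1 := by
      have h1 : (k : ℝ) + 2 ≤ ((m' + 1 : ℕ) : ℝ) := by exact_mod_cast hm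
      linarith
    -- express everything through t
    have h1 : s (m' + 1) = ((m' + 1 : ℕ) : ℝ) * (((m' + 1 : ℕ) : ℝ) + 2 * k + 1) * t (m' + 1) :=
      hst _ (by omega)
    have h2 : s m' = (m' : ℝ) * ((m' : ℝ) + 2 * k + 1) * t m' := hst _ (by omega)
    have h3 : s (m' + 1 - k - 1) = ((m' + 1 - k - 1 : ℕ) : ℝ) *
        (((m' + 1 - k - 1 : ℕ) : ℝ) + 2 * k + 1) * t (m' + 1 - k - 1) := hst _ (by omega)
    have hm1 : ((m' + 1 : ℕ) : ℝ) = (m' : ℝ) + 1 := by push_cast; ring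
    have ham2 : a (m' + 1) = 2 * (((m' + 1 : ℕ) : ℝ) + (k : ℝ)) * t (m' + 1 - k - 1) := by
      have hxne : ((m' + 1 : ℕ) : ℝ) - (k : ℝ) - 1 ≠ 0 := ne_of_gt hx
      rw [ham, h3, hcast1, mul_assoc, two_div_mul hxne]
      ring
    simp only [Nat.add_sub_cancel]
    rw [← h1, hsm, h2, ham2, hm1]
    ring
  -- set up the convex-combination coefficients
  set P : ℕ → ℝ := fun n => (n : ℝ) * ((n : ℝ) + 2 * k + 1) with hPdef
  set lam : ℕ → ℝ := fun m => ((m : ℝ) - 1) * ((m : ℝ) + 2 * k) / P m with hlamdef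
  set mu : ℕ → ℝ := fun m => 2 * ((m : ℝ) + k) / P m with hmudef
  have hmR : ∀ m : ℕ, k + 2 ≤ m → (2 : ℝ) ≤ (m : ℝ) ∧ (0 : ℝ) < P m := by
    intro m hm
    have h1 : (k : ℝ) + 2 ≤ (m : ℝ) := by exact_mod_cast hm
    have h2 : (0 : ℝ) ≤ (k : ℝ) := Nat.cast_nonneg _
    exact ⟨by linarith, hP m (by omega)⟩
  have hl0 : ∀ m, k + 2 ≤ m → 0 ≤ lam m := by
    intro m hm
    obtain ⟨h1, h2⟩ := hmR m hm
    have h3 : (0 : ℝ) ≤ (k : ℝ) := Nat.cast_nonneg _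
    apply div_nonneg _ (le_of_lt h2)
    nlinarith
  have hm0 : ∀ m, k + 2 ≤ m → 0 ≤ mu m := by
    intro m hm
    obtain ⟨h1, h2⟩ := hmR m hm
    have h3 : (0 : ℝ) ≤ (k : ℝ) := Nat.cast_nonneg _
    apply div_nonneg _ (le_of_lt h2)
    nlinarith
  have hsum : ∀ m, k + 2 ≤ m → lam m + mu m = 1 := by
    intro m hm
    obtain ⟨h1, h2⟩ := hmR m hm
    have h2' : P m ≠ 0 := ne_of_gt h2
    rw [hlamdef, hmudef]
    field_simp [hPdef]
    ring
  have hmu : ∀ m, k + 2 ≤ m → mu m ≤ 2 / m := by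
    intro m hm
    obtain ⟨h1, h2⟩ := hmR m hm
    have h3 : (0 : ℝ) ≤ (k : ℝ) := Nat.cast_nonneg _
    have hm0' : (0 : ℝ) < (m : ℝ) := by linarith
    rw [hmudef, div_le_div_iff₀ h2 hm0']
    simp only [hPdef]
    nlinarith
  have hrec : ∀ m, k + 2 ≤ m → t m = lam m * t (m - 1) + mu m * t (m - k - 1) := by
    intro m hm
    obtain ⟨h1, h2⟩ := hmR m hm
    have h2' : P m ≠ 0 := ne_of_gt h2
    have hkey := key m hm
    rw [hlamdef, hmudef]
    simp only
    rw [div_mul_eq_mul_div, div_mul_eq_mul_div, ← add_div, eq_div_iff h2']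
    simp only [hPdef]
    linear_combination hkey
  intro c hc
  set c' : ℝ := min c 1 / 4 with hc'def
  have hmin0 : 0 < min c 1 := lt_min hc one_pos
  have hc'0 : 0 < c' := by rw [hc'def]; linarith
  have hc'1 : c' < 1 := by
    have h := min_le_right c 1
    rw [hc'def]; linarith
  obtain ⟨C0, hC0, hbound⟩ :=
    parking_core k t lam mu hl0 hm0 hsum hmu hrec tinf htinf c' hc'0 hc'1
  refine ⟨C0 * (2 * (k : ℝ) + 2) ^ 2, by positivity, ?_⟩
  intro n hn
  have hPn := hP n hn
  have hsn : s n - (n : ℝ) * ((n : ℝ) + 2 * k + 1) * tinf =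
      (n : ℝ) * ((n : ℝ) + 2 * k + 1) * (t n - tinf) := by
    rw [hst n hn]; ring
  rw [hsn, abs_mul, abs_of_nonneg hPn.le]
  have h1 := hbound n hn
  have h2n : (n : ℝ) ≤ 2 ^ n := by exact_mod_cast Nat.le_of_lt (Nat.lt_two_pow_self (n := n))
  have hone : (1 : ℝ) ≤ 2 ^ n := by
    calc (1 : ℝ) = 1 ^ n := (one_pow n).symm
      _ ≤ 2 ^ n := pow_le_pow_left₀ (by norm_num) (by norm_num) n
  have hk0 : (0 : ℝ) ≤ (k : ℝ) := Nat.cast_nonneg _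
  have hPb : (n : ℝ) * ((n : ℝ) + 2 * k + 1) ≤ (2 * (k : ℝ) + 2) ^ 2 * 4 ^ n := by
    have h4 : (4 : ℝ) ^ n = 2 ^ n * 2 ^ n := by rw [← mul_pow]; norm_num
    have hA : (n : ℝ) ≤ (2 * (k : ℝ) + 2) * 2 ^ n := by nlinarith
    have hB : (n : ℝ) + 2 * k + 1 ≤ (2 * (k : ℝ) + 2) * 2 ^ n := by nlinarith
    calc (n : ℝ) * ((n : ℝ) + 2 * k + 1)
        ≤ ((2 * (k : ℝ) + 2) * 2 ^ n) * ((2 * (k : ℝ) + 2) * 2 ^ n) :=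
          mul_le_mul hA hB (by positivity) (by positivity)
      _ = (2 * (k : ℝ) + 2) ^ 2 * 4 ^ n := by rw [h4]; ring
  have hmin : (4 * c') ^ n ≤ c ^ n := by
    have h4c : 4 * c' = min c 1 := by rw [hc'def]; ring
    rw [h4c]
    exact pow_le_pow_left₀ hmin0.le (min_le_left c 1) n
  calc (n : ℝ) * ((n : ℝ) + 2 * k + 1) * |t n - tinf|
      ≤ ((2 * (k : ℝ) + 2) ^ 2 * 4 ^ n) * (C0 * c' ^ n) :=
        mul_le_mul hPb h1 (abs_nonneg _) (by positivity)
    _ = C0 * (2 * (k : ℝ) + 2) ^ 2 * (4 * c') ^ n := by rw [mul_pow]; ring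
    _ ≤ C0 * (2 * (k : ℝ) + 2) ^ 2 * c ^ n := by
        exact mul_le_mul_of_nonneg_left hmin (by positivity)
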